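/- arXiv:2201.09051 — 3 statements merged into one kernel-verified Lean document; each statement's English description precedes it below -/
import Mathlib

section
/- Let λ ≥ 0 and let δ(z, x) := ‖z − x‖₁ + λ·‖z − x‖₀. If w is a capped C-setback for (x, z), then δ(z + w, x) < δ(z, x). -/
/-- L1 norm: sum of absolute values of coordinates. -/
def l1 {d : ℕ} (v : Fin d → ℝ) : ℝ := ∑ i, |v i|

/-- L0 "norm": number of nonzero coordinates. -/
noncomputable def l0 {d : ℕ} (v : Fin d → ℝ) : ℕ :=
  (Finset.univ.filter (fun i => v i ≠ 0)).card

/-- A C-setback for `(x, z)`: a nonzero vector `w` such that `w i = 0` whenever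
`z i = x i`, and `w i` has sign opposite to `z i - x i`. -/
def IsCSetback {d : ℕ} (x z w : Fin d → ℝ) : Prop :=
  w ≠ 0 ∧ ∀ i, (z i = x i → w i = 0) ∧ w i * (z i - x i) ≤ 0

/-- A capped C-setback: a C-setback with `|w i| ≤ |z i - x i|` for every `i`. -/
def IsCappedCSetback {d : ℕ} (x z w : Fin d → ℝ) : Prop :=
  IsCSetback x z w ∧ ∀ i, |w i| ≤ |z i - x i|

/-- The counterfactual distance `δ(z, x) = ‖z − x‖₁ + λ·‖z − x‖₀`. -/
noncomputable def cfDist {d : ℕ} (lam : ℝ) (z x : Fin d → ℝ) : ℝ :=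
  l1 (z - x) + lam * (l0 (z - x) : ℝ)

/-- If `w` is a capped C-setback for `(x, z)` and `λ ≥ 0`, then
`δ(z + w, x) < δ(z, x)`. -/
theorem cfDist_add_capped_csetback {d : ℕ} (hd : 1 ≤ d) (lam : ℝ) (hlam : 0 ≤ lam)
    (x z w : Fin d → ℝ) (hw : IsCappedCSetback x z w) :
    cfDist lam (z + w) x < cfDist lam z x := by
  obtain ⟨⟨hne, hprop⟩, hcap⟩ := hw
  have key : ∀ i, |(z + w - x) i| = |(z - x) i| - |w i| := by
    intro i
    have h0 := (hprop i).1
    have h1 := (hprop i).2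
    have h2 := hcap i
    have he : (z + w - x) i = (z i - x i) + w i := by
      simp [Pi.add_apply, Pi.sub_apply]; ring
    have he2 : (z - x) i = z i - x i := by simp
    rw [he, he2]
    rcases abs_cases (z i - x i) with ⟨ha, ha'⟩ | ⟨ha, ha'⟩ <;>
      rcases abs_cases (w i) with ⟨hb, hb'⟩ | ⟨hb, hb'⟩ <;>
      rcases abs_cases (z i - x i + w i) with ⟨hc, hc'⟩ | ⟨hc, hc'⟩ <;>
      rw [ha, hb] at h2 ⊢ <;> rw [hc] <;> nlinarith
  have hl1 : l1 (z + w - x) = l1 (z - x) - l1 w := by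
    simp only [l1, key, Finset.sum_sub_distrib]
  have hwpos : 0 < l1 w := by
    obtain ⟨i, hi⟩ : ∃ i, w i ≠ 0 := by
      by_contra h
      push_neg at h
      exact hne (funext fun i => h i)
    have : |w i| ≤ l1 w :=
      Finset.single_le_sum (fun j _ => abs_nonneg (w j)) (Finset.mem_univ i)
    have := abs_pos.mpr hi
    linarith
  have hl0 : l0 (z + w - x) ≤ l0 (z - x) := by
    apply Finset.card_le_card
    intro i hi
    simp only [Finset.mem_filter, Finset.mem_univ, true_and] at hi ⊢
    intro h
    apply hi
    have hz : z i = x i := by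
      have : (z - x) i = z i - x i := by simp
      rw [this] at h; linarith
    have : w i = 0 := (hprop i).1 hz
    simp [Pi.add_apply, Pi.sub_apply, this, hz]
  have hcast : (l0 (z + w - x) : ℝ) ≤ (l0 (z - x) : ℝ) := Nat.cast_le.mpr hl0
  have := mul_le_mul_of_nonneg_left hcast hlam
  unfold cfDist
  linarith
end

section
/- (Proposition 2, weighted Gower-type form.) Let f : ℝ^d → ℕ be any function, t ∈ ℕ a target class, λ ≥ 0, x ∈ ℝ^d, and let α_1, …, α_d > 0 be positive feature weights; set δ_α(z, x) := Σ_i α_i·|z_i − x_i| + λ·‖z − x‖₀. Let I⁺, I⁻, I⁰ be subsets of {1, …, d} and define the feasible set F := { z ∈ ℝ^d : f(z) = t, and z_i ≥ x_i for all i ∈ I⁺, z_i ≤ x_i for all i ∈ I⁻, z_i = x_i for all i ∈ I⁰ }. Suppose z★ ∈ F satisfies δ_α(z★, x) ≤ δ_α(z, x) for all z ∈ F. Then for every capped C-setback w for (x, z★), f(z★ + w) ≠ t. -/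
/-- The weighted counterfactual distance
`δ_α(z, x) = Σ i, α i · |z i − x i| + λ·‖z − x‖₀`. -/
noncomputable def cfDistW {d : ℕ} (α : Fin d → ℝ) (lam : ℝ) (z x : Fin d → ℝ) : ℝ :=
  (∑ i, α i * |z i - x i|) + lam * (l0 (z - x) : ℝ)

/-- Proposition 2 (weighted Gower-type form): with positive weights `α` and
sign constraints given by `I⁺, I⁻, I⁰`, if `z★` is feasible and minimizes
`δ_α(·, x)` over the feasible set, then every capped C-setback for `(x, z★)`
invalidates it: `f (z★ + w) ≠ t`. -/
theorem capped_csetback_invalidates_opt_weighted {d : ℕ} (hd : 1 ≤ d)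
    (f : (Fin d → ℝ) → ℕ) (t : ℕ) (lam : ℝ) (hlam : 0 ≤ lam) (x : Fin d → ℝ)
    (α : Fin d → ℝ) (hα : ∀ i, 0 < α i)
    (Iplus Iminus Izero : Set (Fin d)) (zstar : Fin d → ℝ)
    (hfeas : f zstar = t ∧ (∀ i ∈ Iplus, x i ≤ zstar i) ∧
      (∀ i ∈ Iminus, zstar i ≤ x i) ∧ (∀ i ∈ Izero, zstar i = x i))
    (hopt : ∀ z : Fin d → ℝ,
      (f z = t ∧ (∀ i ∈ Iplus, x i ≤ z i) ∧ (∀ i ∈ Iminus, z i ≤ x i) ∧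
        (∀ i ∈ Izero, z i = x i)) → cfDistW α lam zstar x ≤ cfDistW α lam z x) :
    ∀ w : Fin d → ℝ, IsCappedCSetback x zstar w → f (zstar + w) ≠ t := by
  rintro w ⟨⟨hw0, hsign⟩, hcap⟩ hft
  obtain ⟨hf, hp, hm, h0⟩ := hfeas
  obtain ⟨i0, hi0⟩ := Function.ne_iff.mp hw0
  have hi0' : w i0 ≠ 0 := by simpa using hi0
  have key : ∀ i, |(zstar + w) i - x i| ≤ |zstar i - x i| - |w i| := by
    intro i
    have h1 := (hsign i).2
    have h2 := hcap i
    have he : (zstar + w) i - x i = (zstar i - x i) + w i := by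
      simp [Pi.add_apply]; ring
    rw [he]
    rcases abs_cases (zstar i - x i) with ⟨ha, ha'⟩ | ⟨ha, ha'⟩ <;>
      rcases abs_cases (w i) with ⟨hb, hb'⟩ | ⟨hb, hb'⟩ <;>
      rcases abs_cases ((zstar i - x i) + w i) with ⟨hc, hc'⟩ | ⟨hc, hc'⟩ <;>
      nlinarith
  have habs : ∀ i, |w i| ≤ 0 → w i = 0 := fun i h => abs_eq_zero.mp (le_antisymm h (abs_nonneg _)) -- unused? keep
  have hfeas' : f (zstar + w) = t ∧ (∀ i ∈ Iplus, x i ≤ (zstar + w) i) ∧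
      (∀ i ∈ Iminus, (zstar + w) i ≤ x i) ∧ (∀ i ∈ Izero, (zstar + w) i = x i) := by
    refine ⟨hft, ?_, ?_, ?_⟩
    · intro i hi
      have h1 := hp i hi
      have h2 := hcap i
      have h3 : |zstar i - x i| = zstar i - x i := abs_of_nonneg (by linarith)
      have h4 := neg_abs_le (w i)
      simp only [Pi.add_apply]
      linarith
    · intro i hi
      have h1 := hm i hi
      have h2 := hcap i
      have h3 : |zstar i - x i| = x i - zstar i := by rw [abs_sub_comm]; exact abs_of_nonneg (by linarith)
      have h4 := le_abs_self (w i)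
      simp only [Pi.add_apply]
      linarith
    · intro i hi
      have h1 := (hsign i).1 (h0 i hi)
      simp [Pi.add_apply, h1, h0 i hi]
  have hsum : (∑ i, α i * |(zstar + w) i - x i|) < ∑ i, α i * |zstar i - x i| := by
    refine Finset.sum_lt_sum (fun i _ => ?_) ⟨i0, Finset.mem_univ i0, ?_⟩
    · have h1 := key i
      have h2 := abs_nonneg (w i)
      exact mul_le_mul_of_nonneg_left (by linarith) (hα i).le
    · have h3 : |(zstar + w) i0 - x i0| < |zstar i0 - x i0| := by
        have := abs_pos.mpr hi0'
        linarith [key i0]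
      exact mul_lt_mul_of_pos_left h3 (hα i0)
  have hl0 : l0 ((zstar + w) - x) ≤ l0 (zstar - x) := by
    apply Finset.card_le_card
    intro i hi
    simp only [Finset.mem_filter, Finset.mem_univ, true_and, Pi.sub_apply, Pi.add_apply] at hi ⊢
    intro h
    apply hi
    have hz : zstar i = x i := by linarith [sub_eq_zero.mp h]
    have := (hsign i).1 hz
    rw [hz, this]; ring
  have hlt : cfDistW α lam (zstar + w) x < cfDistW α lam zstar x := by
    unfold cfDistW
    have : lam * (l0 ((zstar + w) - x) : ℝ) ≤ lam * (l0 (zstar - x) : ℝ) :=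
      mul_le_mul_of_nonneg_left (Nat.cast_le.mpr hl0) hlam
    linarith
  exact absurd (hopt _ hfeas') (not_le.mpr hlt)
end

section
/- (Equivalence of the robust-search objective of Definition 7 with a penalized objective.) Let λ ≥ 0, δ(z, x) := ‖z − x‖₁ + λ·‖z − x‖₀, let S ⊆ ℝ^d, and let W : ℝ^d → ℝ^d be a map such that for every z ∈ S and every index i, (W z)_i = 0 whenever z_i = x_i and (W z)_i · (z_i − x_i) ≤ 0. Then for every z ∈ S, δ(z − W z, x) = δ(z, x) + ‖W z‖₁; consequently, a point z★ ∈ S minimizes z ↦ δ(z − W z, x) over S if and only if z★ minimizes z ↦ δ(z, x) + ‖W z‖₁ over S. -/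
lemma abs_sub_of_mul_nonpos (a b : ℝ) (h : b * a ≤ 0) : |a - b| = |a| + |b| := by
  rcases abs_cases a with ⟨ha, ha'⟩ | ⟨ha, ha'⟩ <;>
  rcases abs_cases b with ⟨hb, hb'⟩ | ⟨hb, hb'⟩ <;>
  rcases abs_cases (a - b) with ⟨hc, hc'⟩ | ⟨hc, hc'⟩ <;>
  nlinarith

/-- Equivalence of the robust-search objective of Definition 7 with a
penalized objective: if `W z` is sign-aligned against the intervention for
every `z ∈ S`, then `δ(z − W z, x) = δ(z, x) + ‖W z‖₁` on `S`, and hence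
`z★ ∈ S` minimizes `z ↦ δ(z − W z, x)` over `S` iff it minimizes
`z ↦ δ(z, x) + ‖W z‖₁` over `S`. -/
theorem robust_objective_equiv_penalized {d : ℕ} (hd : 1 ≤ d)
    (lam : ℝ) (hlam : 0 ≤ lam) (x : Fin d → ℝ)
    (S : Set (Fin d → ℝ)) (W : (Fin d → ℝ) → (Fin d → ℝ))
    (hW : ∀ z ∈ S, ∀ i, (z i = x i → W z i = 0) ∧ W z i * (z i - x i) ≤ 0) :
    (∀ z ∈ S, cfDist lam (z - W z) x = cfDist lam z x + l1 (W z)) ∧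
    (∀ zstar ∈ S,
      ((∀ z ∈ S, cfDist lam (zstar - W zstar) x ≤ cfDist lam (z - W z) x) ↔
       (∀ z ∈ S, cfDist lam zstar x + l1 (W zstar) ≤ cfDist lam z x + l1 (W z)))) := by
  have key : ∀ z ∈ S, cfDist lam (z - W z) x = cfDist lam z x + l1 (W z) := by
    intro z hz
    have habs : ∀ i, |(z - W z - x) i| = |(z - x) i| + |W z i| := by
      intro i
      have h := (hW z hz i).2
      have : (z - W z - x) i = (z - x) i - W z i := by
        simp [Pi.sub_apply]; ring
      rw [this]
      exact abs_sub_of_mul_nonpos _ _ (by simpa using h)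
    have hl0 : l0 (z - W z - x) = l0 (z - x) := by
      unfold l0
      congr 1
      apply Finset.filter_congr
      intro i _
      constructor
      · intro h hzx
        apply h
        have hw : W z i = 0 := (hW z hz i).1 (by simpa [sub_eq_zero] using hzx)
        simp [Pi.sub_apply, hw, sub_eq_zero]
        simpa [sub_eq_zero] using hzx
      · intro h hc
        apply h
        have := habs i
        rw [hc] at this
        simp at this
        have h1 : |z i - x i| = 0 := by
          nlinarith [abs_nonneg (z i - x i), abs_nonneg (W z i)]
        simpa [Pi.sub_apply, abs_eq_zero] using h1
    have hl1 : l1 (z - W z - x) = l1 (z - x) + l1 (W z) := by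
      unfold l1
      rw [← Finset.sum_add_distrib]
      exact Finset.sum_congr rfl fun i _ => habs i
    unfold cfDist
    rw [hl1, hl0]
    ring
  refine ⟨key, fun zstar hzs => ?_⟩
  constructor
  · intro h z hz
    rw [← key zstar hzs, ← key z hz]; exact h z hz
  · intro h z hz
    rw [key zstar hzs, key z hz]; exact h z hz
end
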